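/- Let H be a complex Hilbert space, {q_j}_{j∈ℕ} a Hilbert (orthonormal) basis of H, S a closed subspace of H, and P : H → H the orthogonal projection onto S. Then for every f ∈ H and every r ∈ ℕ, ‖f − P f‖ ≤ (Σ_{j ≥ r+1} |⟨q_j, f⟩|²)^{1/2} + Σ_{j=0}^{r} |⟨q_j, f⟩| · ‖q_j − P q_j‖. -/

import Mathlib

open scoped ComplexInnerProductSpace

/-- Finite-rank Bessel identity: the squared norm of the residual after subtracting the
partial Fourier expansion equals the squared norm minus the sum of squared coefficients. -/
lemma aux_bessel_eq {H : Type*} [NormedAddCommGroup H] [InnerProductSpace ℂ H]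
    {ι : Type*} {v : ι → H} (hv : Orthonormal ℂ v) (x : H) (s : Finset ι) :
    ‖x - ∑ i ∈ s, ⟪v i, x⟫ • v i‖ ^ 2 = ‖x‖ ^ 2 - ∑ i ∈ s, ‖⟪v i, x⟫‖ ^ 2 := by
  have h₂ :
      (∑ i ∈ s, ∑ j ∈ s, ⟪v i, x⟫ * ⟪x, v j⟫ * ⟪v j, v i⟫) = (∑ k ∈ s, ⟪v k, x⟫ * ⟪x, v k⟫ : ℂ) := by
    classical exact hv.inner_left_right_finset
  have h₃ : ∀ z : ℂ, RCLike.re (z * (starRingEnd ℂ) z) = ‖z‖ ^ 2 := by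
    intro z
    rw [RCLike.mul_conj]
    norm_cast
  rw [@norm_sub_sq ℂ, sub_add]
  simp only [@InnerProductSpace.norm_sq_eq_re_inner ℂ, inner_sum, sum_inner]
  simp only [inner_smul_right, two_mul, inner_smul_left, inner_conj_symm, ← mul_assoc, h₂,
    add_sub_cancel_right, sub_right_inj]
  simp only [map_sum, ← inner_conj_symm x, ← h₃]
  simp [RCLike.inner_apply, mul_comm]
  rw [← Finset.sum_sub_distrib]
  refine Finset.sum_congr rfl fun i _ => ?_
  norm_cast
  simp [Complex.sq_norm, Complex.normSq_apply]
  rw [← inner_conj_symm x (v i), Complex.conj_re, Complex.conj_im]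
  ring

/-- for a Hilbert basis `q` of a complex Hilbert space `H`, a closed
subspace `S` with orthogonal projection `P`, every `f` and `r` satisfy
`‖f − P f‖ ≤ (Σ_{j ≥ r+1} |⟨q_j, f⟩|²)^{1/2} + Σ_{j=0}^{r} |⟨q_j, f⟩| ‖q_j − P q_j‖`. -/
theorem stmt0 {H : Type*} [NormedAddCommGroup H] [InnerProductSpace ℂ H] [CompleteSpace H]
    (q : HilbertBasis ℕ ℂ H) (S : Submodule ℂ H) (hS : IsClosed (S : Set H))
    [S.HasOrthogonalProjection] (f : H) (r : ℕ) :
    ‖f - (S.orthogonalProjectionOnto f : H)‖ ≤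
      Real.sqrt (∑' j : {j : ℕ // r + 1 ≤ j}, ‖⟪q j.1, f⟫‖ ^ 2) +
      ∑ j ∈ Finset.range (r + 1),
        ‖⟪q j, f⟫‖ * ‖q j - (S.orthogonalProjectionOnto (q j) : H)‖ := by
  set c : ℕ → ℂ := fun j => ⟪q j, f⟫ with hc
  set g : H := ∑ j ∈ Finset.range (r + 1), c j • q j with hg
  set s : H := ∑ j ∈ Finset.range (r + 1), c j • (S.orthogonalProjectionOnto (q j) : H) with hs
  have hsS : s ∈ S := by
    refine Submodule.sum_mem S fun j _ => Submodule.smul_mem S _ ?_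
    exact (S.orthogonalProjectionOnto (q j)).2
  -- Parseval
  have h1 : ∀ j, (⟪f, q j⟫ * ⟪q j, f⟫).re = ‖c j‖ ^ 2 := by
    intro j
    rw [hc, ← inner_conj_symm f (q j), RCLike.conj_mul]
    norm_cast
  have hpars : HasSum (fun j => ‖c j‖ ^ 2) (‖f‖ ^ 2) := by
    have h := (q.hasSum_inner_mul_inner f f).mapL Complex.reCLM
    simp only [Complex.reCLM_apply] at h
    have e1 : (fun j => (⟪f, q j⟫ * ⟪q j, f⟫).re) = fun j => ‖c j‖ ^ 2 := funext h1
    have e2 : (⟪f, f⟫ : ℂ).re = ‖f‖ ^ 2 := inner_self_eq_norm_sq (𝕜 := ℂ) f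
    rwa [e1, e2] at h
  have hsumm : Summable fun j => ‖c j‖ ^ 2 := hpars.summable
  -- tail sum
  have htail : ∑' j : ↑((Finset.range (r + 1) : Finset ℕ) : Set ℕ)ᶜ, ‖c j.1‖ ^ 2
      = ‖f‖ ^ 2 - ∑ j ∈ Finset.range (r + 1), ‖c j‖ ^ 2 := by
    have := Summable.sum_add_tsum_compl (s := Finset.range (r + 1)) hsumm
    rw [hpars.tsum_eq] at this
    linarith
  have hsubty : (∑' j : {j : ℕ // r + 1 ≤ j}, ‖c j.1‖ ^ 2)
      = ∑' j : ↑((Finset.range (r + 1) : Finset ℕ) : Set ℕ)ᶜ, ‖c j.1‖ ^ 2 := by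
    refine tsum_congr_set_coe (fun j => ‖c j‖ ^ 2) ?_
    ext j
    constructor
    · intro h hj
      rw [Finset.mem_coe, Finset.mem_range] at hj
      exact absurd hj (Nat.not_lt.2 h)
    · intro h
      rw [Set.mem_compl_iff, Finset.mem_coe, Finset.mem_range] at h
      exact Nat.not_lt.1 h
  -- norm of residual f - g equals sqrt of tail
  have hfg : ‖f - g‖ ^ 2 = ∑' j : {j : ℕ // r + 1 ≤ j}, ‖c j.1‖ ^ 2 := by
    rw [hsubty, htail, hg]
    exact aux_bessel_eq q.orthonormal f (Finset.range (r + 1))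
  have hfg' : ‖f - g‖ = Real.sqrt (∑' j : {j : ℕ // r + 1 ≤ j}, ‖c j.1‖ ^ 2) := by
    rw [← hfg, Real.sqrt_sq (norm_nonneg _)]
  -- minimality
  have hmin : ‖f - (S.orthogonalProjectionOnto f : H)‖ ≤ ‖f - s‖ := by
    rw [← S.starProjection_apply, Submodule.starProjection_minimal]
    exact ciInf_le ⟨0, Set.forall_mem_range.2 fun x => norm_nonneg _⟩ (⟨s, hsS⟩ : S)
  have h3 : ‖g - s‖ ≤ ∑ j ∈ Finset.range (r + 1),
      ‖c j‖ * ‖q j - (S.orthogonalProjectionOnto (q j) : H)‖ := by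
    rw [hg, hs, ← Finset.sum_sub_distrib]
    refine (norm_sum_le _ _).trans (Finset.sum_le_sum fun j _ => ?_)
    rw [← smul_sub, norm_smul]
  calc ‖f - (S.orthogonalProjectionOnto f : H)‖ ≤ ‖f - s‖ := hmin
    _ ≤ ‖f - g‖ + ‖g - s‖ := by
        have : f - s = (f - g) + (g - s) := by abel
        rw [this]; exact norm_add_le _ _
    _ ≤ Real.sqrt (∑' j : {j : ℕ // r + 1 ≤ j}, ‖⟪q j.1, f⟫‖ ^ 2) +
        ∑ j ∈ Finset.range (r + 1), ‖⟪q j, f⟫‖ * ‖q j - (S.orthogonalProjectionOnto (q j) : H)‖ := by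
        rw [hfg']; exact add_le_add le_rfl h3
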